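/- Let p ≥ 5 be a prime with p ≡ 2 (mod 3), and let θ ∈ ℚ_p with |θ−1|_p < 1. Then for all u, v ∈ ℚ_p with |u|_p = |v|_p = 1 one has |(θ²+θ+1)u² + (2θ+1)uv + v²|_p = 1. -/

import Mathlib

/-- the key quadratic-form estimate: for `p ≡ 2 (mod 3)`, `p ≥ 5`,
`‖θ-1‖ < 1`, and any units `u, v` one has
`‖(θ²+θ+1)u² + (2θ+1)uv + v²‖ = 1`. -/
theorem potts_bethe_quadratic_form_unit (p : ℕ) [Fact (Nat.Prime p)]
    (hp5 : 5 ≤ p) (hp3 : p % 3 = 2) (θ : ℚ_[p]) (hθ : ‖θ - 1‖ < 1) :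
    ∀ u v : ℚ_[p], ‖u‖ = 1 → ‖v‖ = 1 →
      ‖(θ ^ 2 + θ + 1) * u ^ 2 + (2 * θ + 1) * u * v + v ^ 2‖ = 1 := by
  intro u v hu hv
  have hθ1 : ‖θ‖ ≤ 1 := by
    have : θ = (θ - 1) + 1 := by ring
    rw [this]
    calc ‖(θ - 1) + 1‖ ≤ max ‖θ - 1‖ ‖(1 : ℚ_[p])‖ := Padic.nonarchimedean _ _
    _ ≤ 1 := by rw [norm_one]; exact max_le hθ.le le_rfl
  set T : ℤ_[p] := ⟨θ, hθ1⟩ with hT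
  set U : ℤ_[p] := ⟨u, hu.le⟩ with hU
  set V : ℤ_[p] := ⟨v, hv.le⟩ with hV
  have key : (((T ^ 2 + T + 1) * U ^ 2 + (2 * T + 1) * U * V + V ^ 2 : ℤ_[p]) : ℚ_[p])
      = (θ ^ 2 + θ + 1) * u ^ 2 + (2 * θ + 1) * u * v + v ^ 2 := by
    push_cast
    rfl
  rw [← key, PadicInt.padic_norm_e_of_padicInt]
  set E : ℤ_[p] := (T ^ 2 + T + 1) * U ^ 2 + (2 * T + 1) * U * V + V ^ 2 with hE
  have zero_iff : ∀ x : ℤ_[p], PadicInt.toZMod x = 0 ↔ ‖x‖ < 1 := by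
    intro x
    rw [← RingHom.mem_ker, PadicInt.ker_toZMod, PadicInt.maximalIdeal_eq_span_p,
      Ideal.mem_span_singleton, ← PadicInt.norm_lt_one_iff_dvd]
  have hTz : PadicInt.toZMod T = 1 := by
    have h1 : PadicInt.toZMod (T - 1) = 0 := by
      rw [zero_iff]
      have hcoe : ((T - 1 : ℤ_[p]) : ℚ_[p]) = θ - 1 := by push_cast; rfl
      rw [← PadicInt.padic_norm_e_of_padicInt, hcoe]
      exact hθ
    rw [map_sub, map_one, sub_eq_zero] at h1
    exact h1
  have hUz : PadicInt.toZMod U ≠ 0 := by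
    intro h
    rw [zero_iff] at h
    have h1 : ‖U‖ = 1 := by rw [← PadicInt.padic_norm_e_of_padicInt]; exact hu
    rw [h1] at h
    exact lt_irrefl _ h
  have hVz : PadicInt.toZMod V ≠ 0 := by
    intro h
    rw [zero_iff] at h
    have h1 : ‖V‖ = 1 := by rw [← PadicInt.padic_norm_e_of_padicInt]; exact hv
    rw [h1] at h
    exact lt_irrefl _ h
  have hEz : PadicInt.toZMod E ≠ 0 := by
    set a := PadicInt.toZMod U with ha
    set b := PadicInt.toZMod V with hb
    intro h0
    have hexp : (3 : ZMod p) * a ^ 2 + 3 * a * b + b ^ 2 = 0 := by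
      rw [hE] at h0
      simp only [map_add, map_mul, map_pow, map_one, map_ofNat, hTz, ← ha, ← hb] at h0
      linear_combination h0
    have hainv : a * a⁻¹ = 1 := ZMod.mul_inv_of_unit a (Ne.isUnit hUz)
    have hteq : (b * a⁻¹) ^ 2 + 3 * (b * a⁻¹) + 3 = 0 := by
      linear_combination (a⁻¹) ^ 2 * hexp - (3 * a⁻¹ * b + 3 * (a * a⁻¹ + 1)) * hainv
    have hcube : (b * a⁻¹ + 1) ^ 3 = 1 := by linear_combination (b * a⁻¹) * hteq
    have htne : b * a⁻¹ + 1 ≠ 0 := by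
      intro h
      rw [h] at hcube
      simp at hcube
    have hferm : (b * a⁻¹ + 1) ^ (p - 1) = 1 := ZMod.pow_card_sub_one_eq_one htne
    have hgcd : Nat.gcd 3 (p - 1) = 1 := by
      have h3 : ¬ (3 ∣ (p - 1)) := by omega
      exact (Nat.Prime.coprime_iff_not_dvd (by norm_num)).mpr h3
    have hx1 : b * a⁻¹ + 1 = 1 := by
      have := pow_gcd_eq_one.mpr ⟨hcube, hferm⟩
      rwa [hgcd, pow_one] at this
    have ht0 : b * a⁻¹ = 0 := by linear_combination hx1
    have h30 : (3 : ZMod p) = 0 := by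
      linear_combination hteq - (b * a⁻¹ + 3) * ht0
    have hdvd : (p : ℕ) ∣ 3 := by
      have : ((3 : ℕ) : ZMod p) = 0 := by exact_mod_cast h30
      exact (ZMod.natCast_eq_zero_iff 3 p).mp this
    have := Nat.le_of_dvd (by norm_num) hdvd
    omega
  have hle : ‖E‖ ≤ 1 := E.2
  have hnlt : ¬ ‖E‖ < 1 := fun h => hEz ((zero_iff E).mpr h)
  linarith [lt_or_eq_of_le hle |>.resolve_left hnlt]
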